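/- Let Λ = lim(Λ_n, p_n) be the (k+1)-graph associated to a covering sequence of k-graphs, let A be an abelian group, and let c ∈ Z²(Λ_1, A). Then there exists a unique 2-cocycle c' ∈ Z²(Λ, A) such that c'|_{Λ_1} = c and c'(λ,μ) = 0 whenever λ ∈ Λ^{ℕe_{k+1}} or μ ∈ Λ^{ℕe_{k+1}}. -/
import Mathlib


open scoped BigOperators NNReal ENNReal

/-- A `k`-graph: a countable small category presented on its set of morphisms,
with a range map, a source map, a (total, junk-valued on non-composable pairs)
composition, and a degree functor into `ℕ^k` satisfying the factorisation
property. -/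
structure KGraph (k : ℕ) where
  M : Type
  countableM : Countable M
  nonemptyM : Nonempty M
  src : M → M
  rng : M → M
  comp : M → M → M
  deg : M → Fin k → ℕ
  src_src : ∀ x, src (src x) = src x
  rng_src : ∀ x, rng (src x) = src x
  src_rng : ∀ x, src (rng x) = rng x
  rng_rng : ∀ x, rng (rng x) = rng x
  comp_id : ∀ x, comp x (src x) = x
  id_comp : ∀ x, comp (rng x) x = x
  src_comp : ∀ x y, src x = rng y → src (comp x y) = src y
  rng_comp : ∀ x y, src x = rng y → rng (comp x y) = rng x
  comp_assoc : ∀ x y z, src x = rng y → src y = rng z →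
    comp (comp x y) z = comp x (comp y z)
  deg_src : ∀ x, deg (src x) = 0
  deg_rng : ∀ x, deg (rng x) = 0
  deg_comp : ∀ x y, src x = rng y → deg (comp x y) = deg x + deg y
  factor : ∀ (x : M) (m n : Fin k → ℕ), deg x = m + n →
    ∃! p : M × M, src p.1 = rng p.2 ∧ comp p.1 p.2 = x ∧ deg p.1 = m ∧ deg p.2 = n

namespace KGraph

variable {k : ℕ} (Λ : KGraph k)

/-- The vertices (identity morphisms) of a `k`-graph. -/
def IsVertex (v : Λ.M) : Prop := Λ.rng v = v

/-- `Composable x y` means the composition `x ∘ y` (i.e. the path `xy`) is defined. -/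
def Composable (x y : Λ.M) : Prop := Λ.src x = Λ.rng y

/-- The type of vertices of `Λ`. -/
def Vtx := {v : Λ.M // Λ.IsVertex v}

theorem isVertex_src (x : Λ.M) : Λ.IsVertex (Λ.src x) := Λ.rng_src x

theorem isVertex_rng (x : Λ.M) : Λ.IsVertex (Λ.rng x) := Λ.rng_rng x

/-- The source of a morphism, as a vertex. -/
def srcV (x : Λ.M) : Λ.Vtx := ⟨Λ.src x, Λ.isVertex_src x⟩

/-- The set `vΛ^{≤ n}`. -/
def leSet (v : Λ.M) (n : Fin k → ℕ) : Set Λ.M :=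
  {x | Λ.rng x = v ∧ Λ.deg x ≤ n ∧
    ∀ i : Fin k, Λ.deg x + Pi.single i 1 ≤ n →
      ¬∃ y, Λ.rng y = Λ.src x ∧ Λ.deg y = Pi.single i 1}

/-- A `k`-graph is row-finite if `vΛ^n` is finite for every vertex `v` and `n ∈ ℕ^k`. -/
def RowFinite : Prop :=
  ∀ (v : Λ.M) (n : Fin k → ℕ), Λ.IsVertex v → {x | Λ.rng x = v ∧ Λ.deg x = n}.Finite

/-- A `k`-graph is locally convex if whenever `i < j`, `e ∈ Λ^{e_i}`, `f ∈ Λ^{e_j}` and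
`r e = r f`, both `e` and `f` extend to paths of degree `e_i + e_j`. -/
def LocallyConvex : Prop :=
  ∀ (i j : Fin k), i < j → ∀ e f : Λ.M,
    Λ.deg e = Pi.single i 1 → Λ.deg f = Pi.single j 1 → Λ.rng e = Λ.rng f →
    (∃ e', Λ.Composable e e' ∧ Λ.deg e' = Pi.single j 1) ∧
    (∃ f', Λ.Composable f f' ∧ Λ.deg f' = Pi.single i 1)

/-- `Λ^{min}(x,y)`: the pairs `(α, β)` with `xα = yβ` of degree `d x ⊔ d y`. -/
def MinExt (x y : Λ.M) : Set (Λ.M × Λ.M) :=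
  {p | Λ.Composable x p.1 ∧ Λ.Composable y p.2 ∧
    Λ.comp x p.1 = Λ.comp y p.2 ∧ Λ.deg (Λ.comp x p.1) = Λ.deg x ⊔ Λ.deg y}

/-- A subset `E ⊆ vΛ` is exhaustive if every `x ∈ vΛ` has a minimal common extension
with some element of `E`. -/
def Exhaustive (v : Λ.M) (E : Set Λ.M) : Prop :=
  ∀ x, Λ.rng x = v → ∃ μ ∈ E, (Λ.MinExt x μ).Nonempty

/-- A graph trace on `Λ`. -/
def IsGraphTrace (g : Λ.Vtx → ℝ≥0) : Prop :=
  ∀ (v : Λ.Vtx) (n : Fin k → ℕ), g v = ∑ᶠ x ∈ Λ.leSet v.1 n, g (Λ.srcV x)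

/-- A `𝕋`-valued `2`-cocycle on `Λ`, presented as a `ℂ`-valued function that is
unimodular on composable pairs. -/
def IsTCocycle (c : Λ.M → Λ.M → ℂ) : Prop :=
  (∀ x y, Λ.Composable x y → ‖c x y‖ = 1) ∧
  (∀ x y, Λ.IsVertex x ∨ Λ.IsVertex y → c x y = 1) ∧
  (∀ x y z, Λ.Composable x y → Λ.Composable y z →
    c x y * c (Λ.comp x y) z = c y z * c x (Λ.comp y z))

/-- A Cuntz–Krieger `(Λ, c)`-family in a `C*`-algebra `B`: relations (CK1)–(CK4). -/
def IsCKFamily {B : Type*} [NonUnitalCStarAlgebra B] [NormedSpace ℂ B]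
    (c : Λ.M → Λ.M → ℂ) (s : Λ.M → B) : Prop :=
  (∀ v, Λ.IsVertex v → star (s v) = s v ∧ s v * s v = s v) ∧
  (∀ v w, Λ.IsVertex v → Λ.IsVertex w → v ≠ w → s v * s w = 0) ∧
  (∀ x y, Λ.Composable x y → s x * s y = c x y • s (Λ.comp x y)) ∧
  (∀ x, star (s x) * s x = s (Λ.src x)) ∧
  (∀ (v : Λ.M) (n : Fin k → ℕ), Λ.IsVertex v →
    s v = ∑ᶠ x ∈ Λ.leSet v n, s x * star (s x))

end KGraph
attribute [local instance] Classical.propDecidable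

namespace KGraph

variable {k : ℕ}

/-- An `A`-valued (categorical) `2`-cocycle on a `k`-graph, encoded as a total
function that vanishes on non-composable pairs and on pairs involving an
identity morphism, and satisfies the cocycle identity on composable triples. -/
def IsCocycle2 (Λ : KGraph k) {A : Type*} [AddCommGroup A] (c : Λ.M → Λ.M → A) : Prop :=
  (∀ x y, ¬Λ.Composable x y → c x y = 0) ∧
  (∀ x y, Λ.IsVertex x ∨ Λ.IsVertex y → c x y = 0) ∧
  (∀ x y z, Λ.Composable x y → Λ.Composable y z →
    c x y + c (Λ.comp x y) z = c y z + c x (Λ.comp y z))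

/-- The group `Z²(Λ, A)` of `A`-valued `2`-cocycles on `Λ`. -/
def Z2 (Λ : KGraph k) (A : Type*) [AddCommGroup A] : AddSubgroup (Λ.M → Λ.M → A) where
  carrier := {c | Λ.IsCocycle2 c}
  zero_mem' := by
    refine ⟨fun _ _ _ => rfl, fun _ _ _ => rfl, fun _ _ _ _ _ => rfl⟩
  add_mem' := by
    rintro c d ⟨hc1, hc2, hc3⟩ ⟨hd1, hd2, hd3⟩
    refine ⟨fun x y h => ?_, fun x y h => ?_, fun x y z h1 h2 => ?_⟩
    · simp [hc1 x y h, hd1 x y h]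
    · simp [hc2 x y h, hd2 x y h]
    · simp only [Pi.add_apply]
      rw [add_add_add_comm, hc3 x y z h1 h2, hd3 x y z h1 h2, add_add_add_comm]
  neg_mem' := by
    rintro c ⟨hc1, hc2, hc3⟩
    refine ⟨fun x y h => ?_, fun x y h => ?_, fun x y z h1 h2 => ?_⟩
    · simp [hc1 x y h]
    · simp [hc2 x y h]
    · simp only [Pi.neg_apply]
      rw [← neg_add, ← neg_add, hc3 x y z h1 h2]

/-- A `1`-cochain: a function on morphisms vanishing on the identity morphisms. -/
def IsCochain1 (Λ : KGraph k) {A : Type*} [AddCommGroup A] (b : Λ.M → A) : Prop :=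
  ∀ v, Λ.IsVertex v → b v = 0

/-- The coboundary `δ¹ b` of a `1`-cochain `b`. -/
noncomputable def delta1 (Λ : KGraph k) {A : Type*} [AddCommGroup A] (b : Λ.M → A) :
    Λ.M → Λ.M → A :=
  fun x y => if Λ.Composable x y then b x + b y - b (Λ.comp x y) else 0

/-- The group `B²(Λ, A)` of `A`-valued `2`-coboundaries on `Λ`. -/
noncomputable def B2 (Λ : KGraph k) (A : Type*) [AddCommGroup A] :
    AddSubgroup (Λ.M → Λ.M → A) where
  carrier := {c | ∃ b, Λ.IsCochain1 b ∧ c = Λ.delta1 b}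
  zero_mem' := ⟨0, fun _ _ => rfl, by
    funext x y
    simp [delta1]⟩
  add_mem' := by
    rintro c d ⟨b, hb, rfl⟩ ⟨b', hb', rfl⟩
    refine ⟨b + b', fun v hv => by simp [hb v hv, hb' v hv], ?_⟩
    funext x y
    simp only [Pi.add_apply, delta1]
    split <;> [abel; simp]
  neg_mem' := by
    rintro c ⟨b, hb, rfl⟩
    refine ⟨-b, fun v hv => by simp [hb v hv], ?_⟩
    funext x y
    simp only [Pi.neg_apply, delta1]
    split <;> [abel; simp]

/-- The second (categorical) cohomology group `H²(Λ, A) = Z²(Λ,A)/B²(Λ,A)`. -/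
noncomputable def H2 (Λ : KGraph k) (A : Type*) [AddCommGroup A] :=
  Z2 Λ A ⧸ (B2 Λ A).addSubgroupOf (Z2 Λ A)

noncomputable instance (Λ : KGraph k) (A : Type*) [AddCommGroup A] :
    AddCommGroup (H2 Λ A) := by
  unfold H2; infer_instance

/-- A covering of `k`-graphs: a surjective degree-preserving functor that restricts to
bijections `Γv → Λ p(v)` and `vΓ → p(v)Λ` on every vertex `v`. -/
def IsKGraphCovering (Γ Λ : KGraph k) (p : Γ.M → Λ.M) : Prop :=
  Function.Surjective p ∧
  (∀ x, Λ.src (p x) = p (Γ.src x)) ∧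
  (∀ x, Λ.rng (p x) = p (Γ.rng x)) ∧
  (∀ x, Λ.deg (p x) = Γ.deg x) ∧
  (∀ x y, Γ.Composable x y → p (Γ.comp x y) = Λ.comp (p x) (p y)) ∧
  (∀ v, Γ.IsVertex v → Set.BijOn p {x | Γ.src x = v} {y | Λ.src y = p v}) ∧
  (∀ v, Γ.IsVertex v → Set.BijOn p {x | Γ.rng x = v} {y | Λ.rng y = p v})

end KGraph

open KGraph

/-- The `(k+1)`-graph `Λ = lim (Λ_n, p_n)` associated to a covering sequence of
`k`-graphs, together with all its defining data: `L n` is the `k`-graph `Λ_{n+1}`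
(so `L 0 = Λ₁`), `p n : Λ_{n+2} → Λ_{n+1}` are the coverings, `Lam` is the limit
`(k+1)`-graph, `ι n : Λ_{n+1} → Λ` are the injective functors, and `edge` is the
bijection of `⨆_{n ≥ 2} Λ_n^0` onto `Λ^{e_{k+1}}`, subject to the characterising
properties (1)–(5). -/
structure CovSeqLimit (k : ℕ) where
  L : ℕ → KGraph k
  p : ∀ n, (L (n + 1)).M → (L n).M
  p_cov : ∀ n, IsKGraphCovering (L (n + 1)) (L n) (p n)
  Lam : KGraph (k + 1)
  ι : ∀ n, (L n).M → Lam.M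
  ι_inj : ∀ n, Function.Injective (ι n)
  ι_src : ∀ n x, Lam.src (ι n x) = ι n ((L n).src x)
  ι_rng : ∀ n x, Lam.rng (ι n x) = ι n ((L n).rng x)
  ι_comp : ∀ n x y, (L n).Composable x y →
    Lam.comp (ι n x) (ι n y) = ι n ((L n).comp x y)
  ι_deg : ∀ n x, Lam.deg (ι n x) = Fin.snoc ((L n).deg x) 0
  ι_disjoint : ∀ m n x y, ι m x = ι n y → m = n
  ι_union : ∀ z : Lam.M, Lam.deg z (Fin.last k) = 0 → ∃ n x, ι n x = z
  edge : (Σ n : ℕ, (L (n + 1)).M) → Lam.M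
  edge_deg : ∀ q : Σ n, (L (n + 1)).M, (L (q.1 + 1)).IsVertex q.2 →
    Lam.deg (edge q) = Fin.snoc (fun _ : Fin k => 0) 1
  edge_injOn : Set.InjOn edge {q | (L (q.1 + 1)).IsVertex q.2}
  edge_surj : ∀ z : Lam.M, Lam.deg z = Fin.snoc (fun _ : Fin k => 0) 1 →
    ∃ q, (L (q.1 + 1)).IsVertex q.2 ∧ edge q = z
  edge_src : ∀ (n) (v : (L (n + 1)).M), (L (n + 1)).IsVertex v →
    Lam.src (edge ⟨n, v⟩) = ι (n + 1) v
  edge_rng : ∀ (n) (v : (L (n + 1)).M), (L (n + 1)).IsVertex v →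
    Lam.rng (edge ⟨n, v⟩) = ι n (p n v)
  edge_comm : ∀ (n) (x : (L (n + 1)).M),
    Lam.comp (edge ⟨n, (L (n + 1)).rng x⟩) (ι (n + 1) x) =
      Lam.comp (ι n (p n x)) (edge ⟨n, (L (n + 1)).src x⟩)

namespace CovSeqLimit

variable {k : ℕ} (C : CovSeqLimit k)

/-- The iterated covering maps `p_{1,n} : Λ_n → Λ_1`. -/
def pIter : ∀ n, (C.L n).M → (C.L 0).M
  | 0 => id
  | n + 1 => pIter n ∘ C.p n

/-- A degree `d ∈ ℕ^{k+1}` lies in `ℕ e_{k+1}` iff its first `k` coordinates vanish. -/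
def OnlyLast {k : ℕ} (d : Fin (k + 1) → ℕ) : Prop :=
  ∀ i : Fin k, d i.castSucc = 0

/-- The hypothesis that `ξ` assigns to each vertex `v` of `Λ` the path
`ξ_v ∈ Λ_1^0 Λ^{ℕ e_{k+1}} v`. -/
def IsXi (ξ : C.Lam.M → C.Lam.M) : Prop :=
  ∀ v, C.Lam.IsVertex v → C.Lam.src (ξ v) = v ∧ OnlyLast (C.Lam.deg (ξ v)) ∧
    ∃ w, (C.L 0).IsVertex w ∧ C.Lam.rng (ξ v) = C.ι 0 w

/-- The hypothesis that `π : Λ → Λ₁` is the projection determined by the unique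
factorisation `ξ_{r λ} λ = π(λ) β` with `π(λ) ∈ Λ₁` and `β ∈ Λ^{ℕ e_{k+1}}`. -/
def IsProjOnto (ξ : C.Lam.M → C.Lam.M) (π : C.Lam.M → (C.L 0).M) : Prop :=
  ∀ x, ∃ β, OnlyLast (C.Lam.deg β) ∧ C.Lam.Composable (C.ι 0 (π x)) β ∧
    C.Lam.comp (ξ (C.Lam.rng x)) x = C.Lam.comp (C.ι 0 (π x)) β

/-- The map `π_* : Z²(Λ₁, A) → Z²(Λ, A)`, `π_* c (λ, μ) = c(π λ, π μ)`. -/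
noncomputable def pfwd {A : Type*} [AddCommGroup A] (π : C.Lam.M → (C.L 0).M)
    (c : (C.L 0).M → (C.L 0).M → A) : C.Lam.M → C.Lam.M → A :=
  fun x y => if C.Lam.Composable x y then c (π x) (π y) else 0

/-- The restriction map `Z²(Λ, A) → Z²(Λ₁, A)`, `c ↦ c|_{Λ₁}`. -/
def res {A : Type*} [AddCommGroup A] (c : C.Lam.M → C.Lam.M → A) :
    (C.L 0).M → (C.L 0).M → A :=
  fun x y => c (C.ι 0 x) (C.ι 0 y)

end CovSeqLimit

section Infrastructure

open KGraph

variable {k : ℕ}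

theorem KGraph.src_of_isVertex (Λ : KGraph k) {v : Λ.M} (h : Λ.IsVertex v) :
    Λ.src v = v := by
  conv_lhs => rw [← h]
  rw [Λ.src_rng, h]

theorem KGraph.deg_of_isVertex (Λ : KGraph k) {v : Λ.M} (h : Λ.IsVertex v) :
    Λ.deg v = 0 := by
  rw [← h]; exact Λ.deg_rng v

theorem KGraph.isVertex_of_deg_eq_zero (Λ : KGraph k) {x : Λ.M} (h : Λ.deg x = 0) :
    Λ.IsVertex x := by
  obtain ⟨q, _, hq⟩ := Λ.factor x 0 0 (by simp [h])
  have h1 : ((Λ.rng x, x) : Λ.M × Λ.M) = q :=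
    hq _ ⟨Λ.src_rng x, Λ.id_comp x, Λ.deg_rng x, h⟩
  have h2 : ((x, Λ.src x) : Λ.M × Λ.M) = q :=
    hq _ ⟨(Λ.rng_src x).symm, Λ.comp_id x, h, Λ.deg_src x⟩
  exact congrArg Prod.fst (h1.trans h2.symm)

namespace CovSeqLimit

variable (C : CovSeqLimit k)

/-- The "horizontal" part of the degree of `x`. -/
def hdeg (x : C.Lam.M) : Fin (k + 1) → ℕ :=
  Fin.snoc (fun i => C.Lam.deg x i.castSucc) 0

/-- The "vertical" part of the degree of `x`. -/
def vdeg (x : C.Lam.M) : Fin (k + 1) → ℕ :=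
  Fin.snoc (fun _ => 0) (C.Lam.deg x (Fin.last k))

theorem deg_eq_hv (x : C.Lam.M) : C.Lam.deg x = C.hdeg x + C.vdeg x := by
  funext i
  refine Fin.lastCases ?_ (fun j => ?_) i <;>
    simp [hdeg, vdeg, Fin.snoc_last, Fin.snoc_castSucc]

/-- The chosen horizontal/vertical factorisation of `x`. -/
noncomputable def fac (x : C.Lam.M) : C.Lam.M × C.Lam.M :=
  (C.Lam.factor x (C.hdeg x) (C.vdeg x) (C.deg_eq_hv x)).choose

/-- The horizontal part of `x`. -/
noncomputable def hor (x : C.Lam.M) : C.Lam.M := (C.fac x).1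

/-- The vertical part of `x`. -/
noncomputable def ver (x : C.Lam.M) : C.Lam.M := (C.fac x).2

theorem fac_spec (x : C.Lam.M) :
    C.Lam.Composable (C.hor x) (C.ver x) ∧
      C.Lam.comp (C.hor x) (C.ver x) = x ∧
      C.Lam.deg (C.hor x) = C.hdeg x ∧ C.Lam.deg (C.ver x) = C.vdeg x :=
  (C.Lam.factor x (C.hdeg x) (C.vdeg x) (C.deg_eq_hv x)).choose_spec.1

theorem hor_hz (x : C.Lam.M) : C.Lam.deg (C.hor x) (Fin.last k) = 0 := by
  rw [(C.fac_spec x).2.2.1]; simp [hdeg, Fin.snoc_last]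

theorem ver_onlyLast (x : C.Lam.M) : OnlyLast (C.Lam.deg (C.ver x)) := by
  intro i
  rw [(C.fac_spec x).2.2.2]; simp [vdeg, Fin.snoc_castSucc]

theorem rng_hor (x : C.Lam.M) : C.Lam.rng (C.hor x) = C.Lam.rng x := by
  conv_rhs => rw [← (C.fac_spec x).2.1]
  rw [C.Lam.rng_comp _ _ (C.fac_spec x).1]

theorem src_ver (x : C.Lam.M) : C.Lam.src (C.ver x) = C.Lam.src x := by
  conv_rhs => rw [← (C.fac_spec x).2.1]
  rw [C.Lam.src_comp _ _ (C.fac_spec x).1]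

/-- Uniqueness of the horizontal/vertical factorisation. -/
theorem fac_unique {x h v : C.Lam.M}
    (hh : C.Lam.deg h (Fin.last k) = 0) (hv : OnlyLast (C.Lam.deg v))
    (hcomp : C.Lam.Composable h v) (he : C.Lam.comp h v = x) :
    h = C.hor x ∧ v = C.ver x := by
  have hdx : C.Lam.deg x = C.Lam.deg h + C.Lam.deg v := by
    rw [← he, C.Lam.deg_comp _ _ hcomp]
  have hdh : C.Lam.deg h = C.hdeg x := by
    funext i
    refine Fin.lastCases ?_ (fun j => ?_) i
    · simp [hdeg, Fin.snoc_last, hh]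
    · have := congrFun hdx j.castSucc
      simp only [Pi.add_apply, hv j, add_zero] at this
      simp [hdeg, Fin.snoc_castSucc, this]
  have hdv : C.Lam.deg v = C.vdeg x := by
    funext i
    refine Fin.lastCases ?_ (fun j => ?_) i
    · have := congrFun hdx (Fin.last k)
      simp only [Pi.add_apply, hh, zero_add] at this
      simp [vdeg, Fin.snoc_last, this]
    · simp [vdeg, Fin.snoc_castSucc, hv j]
  have := (C.Lam.factor x (C.hdeg x) (C.vdeg x) (C.deg_eq_hv x)).choose_spec.2
    (h, v) ⟨hcomp, he, hdh, hdv⟩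
  exact ⟨congrArg Prod.fst this, congrArg Prod.snd this⟩

theorem hor_of_hz {x : C.Lam.M} (h : C.Lam.deg x (Fin.last k) = 0) :
    C.hor x = x ∧ C.ver x = C.Lam.src x := by
  have := C.fac_unique (x := x) (h := x) (v := C.Lam.src x) h
    (fun i => by rw [C.Lam.deg_src]; rfl)
    ((C.Lam.rng_src x).symm) (C.Lam.comp_id x)
  exact ⟨this.1.symm, this.2.symm⟩

theorem hor_of_onlyLast {x : C.Lam.M} (h : OnlyLast (C.Lam.deg x)) :
    C.hor x = C.Lam.rng x ∧ C.ver x = x := by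
  have := C.fac_unique (x := x) (h := C.Lam.rng x) (v := x)
    (by rw [C.Lam.deg_rng]; rfl) h (C.Lam.src_rng x) (C.Lam.id_comp x)
  exact ⟨this.1.symm, this.2.symm⟩

/-- Any morphism with no vertical degree lies in some `ι n (Λ n)`. -/
theorem exists_rep {x : C.Lam.M} (h : C.Lam.deg x (Fin.last k) = 0) :
    ∃ n y, C.ι n y = x := C.ι_union x h

theorem hz_ι (n : ℕ) (y : (C.L n).M) :
    C.Lam.deg (C.ι n y) (Fin.last k) = 0 := by
  rw [C.ι_deg]; simp [Fin.snoc_last]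

/-- The chosen representative of a horizontal morphism. -/
noncomputable def repS (x : C.Lam.M) : Σ n, (C.L n).M :=
  if h : C.Lam.deg x (Fin.last k) = 0 then
    ⟨(C.ι_union x h).choose, (C.ι_union x h).choose_spec.choose⟩
  else ⟨0, Classical.choice (C.L 0).nonemptyM⟩

theorem repS_spec {x : C.Lam.M} (h : C.Lam.deg x (Fin.last k) = 0) :
    C.ι (C.repS x).1 (C.repS x).2 = x := by
  rw [repS, dif_pos h]
  exact (C.ι_union x h).choose_spec.choose_spec

/-- The projection of a horizontal morphism to `Λ₁`. -/
noncomputable def projv (x : C.Lam.M) : (C.L 0).M :=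
  C.pIter (C.repS x).1 (C.repS x).2

theorem pIter_eq_of_ι_eq (s : Σ n, (C.L n).M) (n : ℕ) (y : (C.L n).M)
    (h : C.ι s.1 s.2 = C.ι n y) : C.pIter s.1 s.2 = C.pIter n y := by
  obtain ⟨m, z⟩ := s
  have hm : m = n := C.ι_disjoint m n z y h
  subst hm
  rw [C.ι_inj m h]

theorem projv_eq {n : ℕ} {y : (C.L n).M} {x : C.Lam.M} (h : C.ι n y = x) :
    C.projv x = C.pIter n y := by
  have hz : C.Lam.deg x (Fin.last k) = 0 := h ▸ C.hz_ι n y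
  exact C.pIter_eq_of_ι_eq _ n y ((C.repS_spec hz).trans h.symm)

/-- The projection `π : Λ → Λ₁`. -/
noncomputable def proj (x : C.Lam.M) : (C.L 0).M := C.projv (C.hor x)

theorem pIter_succ (n : ℕ) (x : (C.L (n + 1)).M) :
    C.pIter (n + 1) x = C.pIter n (C.p n x) := rfl

theorem pIter_zero (x : (C.L 0).M) : C.pIter 0 x = x := rfl

theorem p_src (n : ℕ) (x : (C.L (n + 1)).M) :
    (C.L n).src (C.p n x) = C.p n ((C.L (n + 1)).src x) := (C.p_cov n).2.1 x

theorem p_rng (n : ℕ) (x : (C.L (n + 1)).M) :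
    (C.L n).rng (C.p n x) = C.p n ((C.L (n + 1)).rng x) := (C.p_cov n).2.2.1 x

theorem p_composable {n : ℕ} {x y : (C.L (n + 1)).M}
    (h : (C.L (n + 1)).Composable x y) : (C.L n).Composable (C.p n x) (C.p n y) := by
  rw [Composable, C.p_src, C.p_rng, h]

theorem p_comp {n : ℕ} {x y : (C.L (n + 1)).M} (h : (C.L (n + 1)).Composable x y) :
    C.p n ((C.L (n + 1)).comp x y) = (C.L n).comp (C.p n x) (C.p n y) :=
  (C.p_cov n).2.2.2.2.1 x y h

theorem p_isVertex {n : ℕ} {v : (C.L (n + 1)).M} (h : (C.L (n + 1)).IsVertex v) :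
    (C.L n).IsVertex (C.p n v) := by
  rw [IsVertex, C.p_rng, h]

theorem pIter_src (n : ℕ) (x : (C.L n).M) :
    (C.L 0).src (C.pIter n x) = C.pIter n ((C.L n).src x) := by
  induction n with
  | zero => rfl
  | succ n ih => rw [C.pIter_succ, ih, C.p_src, C.pIter_succ]

theorem pIter_rng (n : ℕ) (x : (C.L n).M) :
    (C.L 0).rng (C.pIter n x) = C.pIter n ((C.L n).rng x) := by
  induction n with
  | zero => rfl
  | succ n ih => rw [C.pIter_succ, ih, C.p_rng, C.pIter_succ]

theorem pIter_composable {n : ℕ} {x y : (C.L n).M} (h : (C.L n).Composable x y) :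
    (C.L 0).Composable (C.pIter n x) (C.pIter n y) := by
  rw [Composable, C.pIter_src, C.pIter_rng, h]

theorem pIter_comp {n : ℕ} {x y : (C.L n).M} (h : (C.L n).Composable x y) :
    C.pIter n ((C.L n).comp x y) = (C.L 0).comp (C.pIter n x) (C.pIter n y) := by
  induction n with
  | zero => rfl
  | succ n ih =>
    rw [C.pIter_succ, C.p_comp h, ih (C.p_composable h), C.pIter_succ, C.pIter_succ]

theorem pIter_isVertex {n : ℕ} {v : (C.L n).M} (h : (C.L n).IsVertex v) :
    (C.L 0).IsVertex (C.pIter n v) := by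
  induction n with
  | zero => exact h
  | succ n ih => exact ih (C.p_isVertex h)

theorem ι_composable {n : ℕ} {a b : (C.L n).M} (h : (C.L n).Composable a b) :
    C.Lam.Composable (C.ι n a) (C.ι n b) := by
  rw [Composable, C.ι_src, C.ι_rng, h]

theorem composable_of_ι {m n : ℕ} {a : (C.L m).M} {b : (C.L n).M}
    (h : C.Lam.Composable (C.ι m a) (C.ι n b)) :
    ∃ hmn : m = n, (C.L n).Composable (hmn ▸ a) b := by
  rw [Composable, C.ι_src, C.ι_rng] at h
  have hmn : m = n := C.ι_disjoint m n _ _ h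
  subst hmn
  exact ⟨rfl, C.ι_inj m h⟩

theorem projv_isVertex {v : C.Lam.M} (h : C.Lam.IsVertex v) :
    (C.L 0).IsVertex (C.projv v) := by
  have hz : C.Lam.deg v (Fin.last k) = 0 := by
    rw [C.Lam.deg_of_isVertex h]; rfl
  obtain ⟨n, w, hw⟩ := C.exists_rep hz
  have hwv : (C.L n).IsVertex w := by
    apply C.ι_inj n
    rw [← C.ι_rng, hw, h]
  rw [C.projv_eq hw]
  exact C.pIter_isVertex hwv

theorem proj_isVertex {v : C.Lam.M} (h : C.Lam.IsVertex v) :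
    (C.L 0).IsVertex (C.proj v) := by
  have hz : C.Lam.deg v (Fin.last k) = 0 := by
    rw [C.Lam.deg_of_isVertex h]; rfl
  rw [proj, (C.hor_of_hz hz).1]
  exact C.projv_isVertex h

theorem proj_isVertex_of_onlyLast {x : C.Lam.M} (h : OnlyLast (C.Lam.deg x)) :
    (C.L 0).IsVertex (C.proj x) := by
  rw [proj, (C.hor_of_onlyLast h).1]
  exact C.projv_isVertex (C.Lam.isVertex_rng x)

theorem proj_ι0 (a : (C.L 0).M) : C.proj (C.ι 0 a) = a := by
  rw [proj, (C.hor_of_hz (C.hz_ι 0 a)).1, C.projv_eq rfl, C.pIter_zero]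

theorem proj_hor (x : C.Lam.M) : C.proj (C.hor x) = C.proj x := by
  rw [proj, (C.hor_of_hz (C.hor_hz x)).1]; rfl

/-- Key lemma: composing a purely vertical morphism with a horizontal one on the
right does not change the projection to `Λ₁`. -/
theorem proj_vcomp_hz : ∀ (j : ℕ) (α g : C.Lam.M),
    C.Lam.deg α = Fin.snoc (fun _ : Fin k => 0) j →
    C.Lam.Composable α g → C.Lam.deg g (Fin.last k) = 0 →
    C.proj (C.Lam.comp α g) = C.proj g := by
  intro j
  induction j with
  | zero =>
    intro α g hdα hcomp _
    have hα0 : C.Lam.deg α = 0 := by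
      rw [hdα]; funext i
      refine Fin.lastCases ?_ (fun i => ?_) i <;>
        simp [Fin.snoc_last, Fin.snoc_castSucc]
    have hv : C.Lam.IsVertex α := C.Lam.isVertex_of_deg_eq_zero hα0
    have hα : α = C.Lam.rng g := by
      rw [← C.Lam.src_of_isVertex hv]; exact hcomp
    rw [hα, C.Lam.id_comp]
  | succ j ih =>
    intro α g hdα hcomp hg
    obtain ⟨⟨e, α₁⟩, hc1, hc2, hc3, hc4⟩ :=
      (C.Lam.factor α (Fin.snoc (fun _ : Fin k => 0) 1) (Fin.snoc (fun _ : Fin k => 0) j)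
        (by
          rw [hdα]; funext i
          refine Fin.lastCases ?_ (fun i => ?_) i
          · simp only [Fin.snoc_last, Pi.add_apply]; omega
          · simp [Fin.snoc_castSucc])).exists
    have hsα₁ : C.Lam.src α₁ = C.Lam.src α := by
      rw [← hc2, C.Lam.src_comp _ _ hc1]
    have hcα₁g : C.Lam.Composable α₁ g := by
      show C.Lam.src α₁ = C.Lam.rng g
      rw [hsα₁]; exact hcomp
    have hIH := ih α₁ g hc4 hcα₁g hg
    obtain ⟨m, x, hmx⟩ := C.exists_rep (C.hor_hz (C.Lam.comp α₁ g))
    obtain ⟨⟨n, v⟩, hvv, hev⟩ := C.edge_surj e hc3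
    have hse : C.Lam.src e = C.Lam.rng (C.hor (C.Lam.comp α₁ g)) := by
      rw [C.rng_hor, C.Lam.rng_comp _ _ hcα₁g, ← hc1]
    have hv1 : C.ι (n + 1) v = C.ι m ((C.L m).rng x) := by
      rw [← C.edge_src n v hvv, hev, hse, ← hmx, C.ι_rng]
    have hnm : n + 1 = m := C.ι_disjoint _ _ _ _ hv1
    subst hnm
    have hvx : v = (C.L (n + 1)).rng x := C.ι_inj _ hv1
    have hecomm : C.Lam.comp e (C.hor (C.Lam.comp α₁ g)) =
        C.Lam.comp (C.ι n (C.p n x)) (C.edge ⟨n, (C.L (n + 1)).src x⟩) := by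
      rw [← hmx, ← hev, hvx]
      exact C.edge_comm n x
    have hvsx := (C.L (n + 1)).isVertex_src x
    have hPe₂ : C.Lam.src (C.ι n (C.p n x)) =
        C.Lam.rng (C.edge ⟨n, (C.L (n + 1)).src x⟩) := by
      rw [C.ι_src, C.p_src, C.edge_rng _ _ hvsx]
    have he₂v : C.Lam.src (C.edge ⟨n, (C.L (n + 1)).src x⟩) =
        C.Lam.rng (C.ver (C.Lam.comp α₁ g)) := by
      rw [C.edge_src _ _ hvsx, ← C.ι_src, hmx]
      exact (C.fac_spec (C.Lam.comp α₁ g)).1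
    have hmain : C.Lam.comp α g =
        C.Lam.comp (C.ι n (C.p n x))
          (C.Lam.comp (C.edge ⟨n, (C.L (n + 1)).src x⟩) (C.ver (C.Lam.comp α₁ g))) := by
      calc C.Lam.comp α g = C.Lam.comp (C.Lam.comp e α₁) g := by rw [hc2]
        _ = C.Lam.comp e (C.Lam.comp α₁ g) := C.Lam.comp_assoc _ _ _ hc1 hcα₁g
        _ = C.Lam.comp e (C.Lam.comp (C.hor (C.Lam.comp α₁ g)) (C.ver (C.Lam.comp α₁ g))) := by
            rw [(C.fac_spec (C.Lam.comp α₁ g)).2.1]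
        _ = C.Lam.comp (C.Lam.comp e (C.hor (C.Lam.comp α₁ g))) (C.ver (C.Lam.comp α₁ g)) :=
            (C.Lam.comp_assoc _ _ _ hse (C.fac_spec (C.Lam.comp α₁ g)).1).symm
        _ = C.Lam.comp (C.Lam.comp (C.ι n (C.p n x)) (C.edge ⟨n, (C.L (n + 1)).src x⟩))
              (C.ver (C.Lam.comp α₁ g)) := by rw [hecomm]
        _ = _ := C.Lam.comp_assoc _ _ _ hPe₂ he₂v
    have honly : OnlyLast (C.Lam.deg (C.Lam.comp (C.edge ⟨n, (C.L (n + 1)).src x⟩)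
        (C.ver (C.Lam.comp α₁ g)))) := by
      intro i
      rw [C.Lam.deg_comp _ _ he₂v, Pi.add_apply, C.edge_deg _ hvsx, C.ver_onlyLast _ i]
      simp [Fin.snoc_castSucc]
    have hcPE : C.Lam.Composable (C.ι n (C.p n x))
        (C.Lam.comp (C.edge ⟨n, (C.L (n + 1)).src x⟩) (C.ver (C.Lam.comp α₁ g))) := by
      show C.Lam.src _ = C.Lam.rng _
      rw [C.Lam.rng_comp _ _ he₂v]; exact hPe₂
    have hhor := (C.fac_unique (C.hz_ι n (C.p n x)) honly hcPE hmain.symm).1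
    calc C.proj (C.Lam.comp α g) = C.projv (C.hor (C.Lam.comp α g)) := rfl
      _ = C.pIter n (C.p n x) := C.projv_eq hhor
      _ = C.pIter (n + 1) x := rfl
      _ = C.projv (C.hor (C.Lam.comp α₁ g)) := (C.projv_eq hmx).symm
      _ = C.proj g := hIH

/-- Left-composition with a vertical morphism does not change the projection. -/
theorem proj_vcomp {α y : C.Lam.M} (hα : OnlyLast (C.Lam.deg α))
    (hcomp : C.Lam.Composable α y) : C.proj (C.Lam.comp α y) = C.proj y := by
  have hcg : C.Lam.Composable α (C.hor y) := by
    show C.Lam.src α = C.Lam.rng (C.hor y)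
    rw [C.rng_hor]; exact hcomp
  have h1 : C.Lam.comp α y = C.Lam.comp (C.Lam.comp α (C.hor y)) (C.ver y) := by
    conv_lhs => rw [← (C.fac_spec y).2.1]
    rw [C.Lam.comp_assoc _ _ _ hcg (C.fac_spec y).1]
  have hsrc : C.Lam.src (C.ver (C.Lam.comp α (C.hor y))) = C.Lam.rng (C.ver y) := by
    rw [C.src_ver, C.Lam.src_comp _ _ hcg]
    exact (C.fac_spec y).1
  have h2 : C.Lam.comp α y =
      C.Lam.comp (C.hor (C.Lam.comp α (C.hor y)))
        (C.Lam.comp (C.ver (C.Lam.comp α (C.hor y))) (C.ver y)) := by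
    rw [h1]
    conv_lhs => rw [← (C.fac_spec (C.Lam.comp α (C.hor y))).2.1]
    rw [C.Lam.comp_assoc _ _ _ (C.fac_spec (C.Lam.comp α (C.hor y))).1 hsrc]
  have honly : OnlyLast (C.Lam.deg
      (C.Lam.comp (C.ver (C.Lam.comp α (C.hor y))) (C.ver y))) := by
    intro i
    rw [C.Lam.deg_comp _ _ hsrc, Pi.add_apply, C.ver_onlyLast _ i, C.ver_onlyLast _ i]
  have hcc : C.Lam.Composable (C.hor (C.Lam.comp α (C.hor y)))
      (C.Lam.comp (C.ver (C.Lam.comp α (C.hor y))) (C.ver y)) := by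
    show C.Lam.src _ = C.Lam.rng _
    rw [C.Lam.rng_comp _ _ hsrc]
    exact (C.fac_spec (C.Lam.comp α (C.hor y))).1
  have hhor := (C.fac_unique (C.hor_hz (C.Lam.comp α (C.hor y))) honly hcc h2.symm).1
  have hdα : C.Lam.deg α = Fin.snoc (fun _ : Fin k => 0) (C.Lam.deg α (Fin.last k)) := by
    funext i
    refine Fin.lastCases ?_ (fun i => ?_) i
    · simp [Fin.snoc_last]
    · simp [Fin.snoc_castSucc, hα i]
  calc C.proj (C.Lam.comp α y) = C.projv (C.hor (C.Lam.comp α y)) := rfl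
    _ = C.projv (C.hor (C.Lam.comp α (C.hor y))) := by rw [← hhor]
    _ = C.proj (C.Lam.comp α (C.hor y)) := rfl
    _ = C.proj (C.hor y) := C.proj_vcomp_hz _ α (C.hor y) hdα hcg (C.hor_hz y)
    _ = C.proj y := C.proj_hor y

/-- The projection is functorial on compositions with a horizontal left factor. -/
theorem proj_hcomp {h z : C.Lam.M} (hh : C.Lam.deg h (Fin.last k) = 0)
    (hcomp : C.Lam.Composable h z) :
    (C.L 0).Composable (C.proj h) (C.proj z) ∧
      C.proj (C.Lam.comp h z) = (C.L 0).comp (C.proj h) (C.proj z) := by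
  obtain ⟨n, a, hna⟩ := C.exists_rep hh
  obtain ⟨m, b, hmb⟩ := C.exists_rep (C.hor_hz z)
  have hcg : C.Lam.Composable h (C.hor z) := by
    show C.Lam.src h = C.Lam.rng (C.hor z)
    rw [C.rng_hor]; exact hcomp
  have hcg' : C.Lam.src (C.ι n a) = C.Lam.rng (C.ι m b) := by
    rw [hna, hmb]; exact hcg
  rw [C.ι_src, C.ι_rng] at hcg'
  have hnm : n = m := C.ι_disjoint _ _ _ _ hcg'
  subst hnm
  have hab : (C.L n).Composable a b := C.ι_inj n hcg'
  have h1 : C.Lam.comp h z = C.Lam.comp (C.Lam.comp h (C.hor z)) (C.ver z) := by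
    conv_lhs => rw [← (C.fac_spec z).2.1]
    rw [C.Lam.comp_assoc _ _ _ hcg (C.fac_spec z).1]
  have hcompab : C.Lam.comp h (C.hor z) = C.ι n ((C.L n).comp a b) := by
    rw [← hna, ← hmb, C.ι_comp n a b hab]
  have hsv : C.Lam.Composable (C.Lam.comp h (C.hor z)) (C.ver z) := by
    show C.Lam.src _ = C.Lam.rng _
    rw [C.Lam.src_comp _ _ hcg]
    exact (C.fac_spec z).1
  have hfu := C.fac_unique (x := C.Lam.comp h z) (h := C.Lam.comp h (C.hor z))
    (v := C.ver z) (by rw [hcompab]; exact C.hz_ι _ _) (C.ver_onlyLast z) hsv h1.symm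
  have hproj : C.proj (C.Lam.comp h z) = C.pIter n ((C.L n).comp a b) := by
    rw [proj, ← hfu.1, hcompab]
    exact C.projv_eq rfl
  have hprojh : C.proj h = C.pIter n a := by
    rw [proj, (C.hor_of_hz hh).1]
    exact C.projv_eq hna
  have hprojz : C.proj z = C.pIter n b := by
    rw [proj]
    exact C.projv_eq hmb
  constructor
  · rw [hprojh, hprojz]; exact C.pIter_composable hab
  · rw [hproj, hprojh, hprojz, C.pIter_comp hab]

/-- The projection `π : Λ → Λ₁` is a functor. -/
theorem proj_comp {x y : C.Lam.M} (hcomp : C.Lam.Composable x y) :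
    (C.L 0).Composable (C.proj x) (C.proj y) ∧
      C.proj (C.Lam.comp x y) = (C.L 0).comp (C.proj x) (C.proj y) := by
  have hvy : C.Lam.Composable (C.ver x) y := by
    show C.Lam.src _ = C.Lam.rng _
    rw [C.src_ver]; exact hcomp
  have h1 : C.Lam.comp x y = C.Lam.comp (C.hor x) (C.Lam.comp (C.ver x) y) := by
    conv_lhs => rw [← (C.fac_spec x).2.1]
    rw [C.Lam.comp_assoc _ _ _ (C.fac_spec x).1 hvy]
  have hcz : C.Lam.Composable (C.hor x) (C.Lam.comp (C.ver x) y) := by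
    show C.Lam.src _ = C.Lam.rng _
    rw [C.Lam.rng_comp _ _ hvy]
    exact (C.fac_spec x).1
  obtain ⟨hc0, he0⟩ := C.proj_hcomp (C.hor_hz x) hcz
  rw [C.proj_hor, C.proj_vcomp (C.ver_onlyLast x) hvy] at hc0 he0
  rw [h1]
  exact ⟨hc0, he0⟩

/-- Any cocycle on `Λ` extending `c` and vanishing on vertical morphisms agrees with
`c ∘ pIter` on each `ι n (Λ n)`. -/
theorem cext_horiz {A : Type*} [AddCommGroup A] {c : (C.L 0).M → (C.L 0).M → A}
    {c' : C.Lam.M → C.Lam.M → A} (hZ : C.Lam.IsCocycle2 c')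
    (hres : ∀ x y, c' (C.ι 0 x) (C.ι 0 y) = c x y)
    (hvan : ∀ x y, OnlyLast (C.Lam.deg x) ∨ OnlyLast (C.Lam.deg y) → c' x y = 0) :
    ∀ (n : ℕ) (a b : (C.L n).M), (C.L n).Composable a b →
      c' (C.ι n a) (C.ι n b) = c (C.pIter n a) (C.pIter n b) := by
  intro n
  induction n with
  | zero => intro a b _; exact hres a b
  | succ n ih =>
    intro a b hab
    obtain ⟨-, -, hc3⟩ := hZ
    have hvra := (C.L (n + 1)).isVertex_rng a
    have hvsa := (C.L (n + 1)).isVertex_src a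
    have hvsb := (C.L (n + 1)).isVertex_src b
    have he_ol : OnlyLast (C.Lam.deg (C.edge ⟨n, (C.L (n + 1)).rng a⟩)) := by
      intro i; rw [C.edge_deg _ hvra]; simp [Fin.snoc_castSucc]
    have he₁_ol : OnlyLast (C.Lam.deg (C.edge ⟨n, (C.L (n + 1)).src a⟩)) := by
      intro i; rw [C.edge_deg _ hvsa]; simp [Fin.snoc_castSucc]
    have he₂_ol : OnlyLast (C.Lam.deg (C.edge ⟨n, (C.L (n + 1)).src b⟩)) := by
      intro i; rw [C.edge_deg _ hvsb]; simp [Fin.snoc_castSucc]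
    have hce : C.Lam.Composable (C.edge ⟨n, (C.L (n + 1)).rng a⟩) (C.ι (n + 1) a) := by
      show C.Lam.src _ = C.Lam.rng _
      rw [C.edge_src _ _ hvra, C.ι_rng]
    have hcab := C.ι_composable hab
    have T1 := hc3 _ _ _ hce hcab
    rw [hvan _ _ (Or.inl he_ol), hvan _ _ (Or.inl he_ol), zero_add, add_zero] at T1
    have hPe₁ : C.Lam.Composable (C.ι n (C.p n a)) (C.edge ⟨n, (C.L (n + 1)).src a⟩) := by
      show C.Lam.src _ = C.Lam.rng _
      rw [C.ι_src, C.p_src, C.edge_rng _ _ hvsa]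
    have he₁b : C.Lam.Composable (C.edge ⟨n, (C.L (n + 1)).src a⟩) (C.ι (n + 1) b) := by
      show C.Lam.src _ = C.Lam.rng _
      rw [C.edge_src _ _ hvsa, C.ι_rng, hab]
    have T2 := hc3 _ _ _ hPe₁ he₁b
    rw [hvan _ _ (Or.inr he₁_ol), hvan _ _ (Or.inl he₁_ol), zero_add, zero_add] at T2
    have he₁b' : C.Lam.comp (C.edge ⟨n, (C.L (n + 1)).src a⟩) (C.ι (n + 1) b) =
        C.Lam.comp (C.ι n (C.p n b)) (C.edge ⟨n, (C.L (n + 1)).src b⟩) := by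
      rw [hab]
      exact C.edge_comm n b
    have hPQ : C.Lam.Composable (C.ι n (C.p n a)) (C.ι n (C.p n b)) := by
      show C.Lam.src _ = C.Lam.rng _
      rw [C.ι_src, C.p_src, C.ι_rng, C.p_rng, hab]
    have hQe₂ : C.Lam.Composable (C.ι n (C.p n b)) (C.edge ⟨n, (C.L (n + 1)).src b⟩) := by
      show C.Lam.src _ = C.Lam.rng _
      rw [C.ι_src, C.p_src, C.edge_rng _ _ hvsb]
    have T3 := hc3 _ _ _ hPQ hQe₂
    rw [hvan _ _ (Or.inr he₂_ol), hvan _ _ (Or.inr he₂_ol), add_zero, zero_add] at T3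
    calc c' (C.ι (n + 1) a) (C.ι (n + 1) b)
        = c' (C.Lam.comp (C.edge ⟨n, (C.L (n + 1)).rng a⟩) (C.ι (n + 1) a))
            (C.ι (n + 1) b) := T1.symm
      _ = c' (C.Lam.comp (C.ι n (C.p n a)) (C.edge ⟨n, (C.L (n + 1)).src a⟩))
            (C.ι (n + 1) b) := by rw [C.edge_comm n a]
      _ = c' (C.ι n (C.p n a))
            (C.Lam.comp (C.edge ⟨n, (C.L (n + 1)).src a⟩) (C.ι (n + 1) b)) := T2
      _ = c' (C.ι n (C.p n a))
            (C.Lam.comp (C.ι n (C.p n b)) (C.edge ⟨n, (C.L (n + 1)).src b⟩)) := by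
            rw [he₁b']
      _ = c' (C.ι n (C.p n a)) (C.ι n (C.p n b)) := T3.symm
      _ = c (C.pIter n (C.p n a)) (C.pIter n (C.p n b)) := ih _ _ (C.p_composable hab)
      _ = c (C.pIter (n + 1) a) (C.pIter (n + 1) b) := rfl

/-- Uniqueness: any cocycle on `Λ` extending `c` and vanishing on vertical morphisms
is given by `c ∘ π` on composable pairs. -/
theorem cext_eq {A : Type*} [AddCommGroup A] {c : (C.L 0).M → (C.L 0).M → A}
    {c' : C.Lam.M → C.Lam.M → A} (hZ : C.Lam.IsCocycle2 c')
    (hres : ∀ x y, c' (C.ι 0 x) (C.ι 0 y) = c x y)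
    (hvan : ∀ x y, OnlyLast (C.Lam.deg x) ∨ OnlyLast (C.Lam.deg y) → c' x y = 0)
    {x y : C.Lam.M} (hcomp : C.Lam.Composable x y) :
    c' x y = c (C.proj x) (C.proj y) := by
  obtain ⟨hz1, hz2, hz3⟩ := hZ
  have hvy : C.Lam.Composable (C.ver x) y := by
    show C.Lam.src _ = C.Lam.rng _
    rw [C.src_ver]; exact hcomp
  have T1 := hz3 (C.hor x) (C.ver x) y (C.fac_spec x).1 hvy
  rw [(C.fac_spec x).2.1, hvan _ _ (Or.inr (C.ver_onlyLast x)),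
    hvan _ _ (Or.inl (C.ver_onlyLast x)), zero_add, zero_add] at T1
  have hcz : C.Lam.Composable (C.hor x) (C.Lam.comp (C.ver x) y) := by
    show C.Lam.src _ = C.Lam.rng _
    rw [C.Lam.rng_comp _ _ hvy]
    exact (C.fac_spec x).1
  have hcz' : C.Lam.Composable (C.hor x) (C.hor (C.Lam.comp (C.ver x) y)) := by
    show C.Lam.src _ = C.Lam.rng _
    rw [C.rng_hor]; exact hcz
  have T2 := hz3 _ _ _ hcz' (C.fac_spec (C.Lam.comp (C.ver x) y)).1
  rw [(C.fac_spec (C.Lam.comp (C.ver x) y)).2.1,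
    hvan _ _ (Or.inr (C.ver_onlyLast _)), hvan _ _ (Or.inr (C.ver_onlyLast _)),
    add_zero, zero_add] at T2
  obtain ⟨n, a, hna⟩ := C.exists_rep (C.hor_hz x)
  obtain ⟨m, b, hmb⟩ := C.exists_rep (C.hor_hz (C.Lam.comp (C.ver x) y))
  have hcab : C.Lam.src (C.ι n a) = C.Lam.rng (C.ι m b) := by
    rw [hna, hmb]; exact hcz'
  rw [C.ι_src, C.ι_rng] at hcab
  have hnm : n = m := C.ι_disjoint _ _ _ _ hcab
  subst hnm
  have hab : (C.L n).Composable a b := C.ι_inj n hcab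
  calc c' x y = c' (C.hor x) (C.Lam.comp (C.ver x) y) := T1
    _ = c' (C.hor x) (C.hor (C.Lam.comp (C.ver x) y)) := T2.symm
    _ = c' (C.ι n a) (C.ι n b) := by rw [hna, hmb]
    _ = c (C.pIter n a) (C.pIter n b) := C.cext_horiz ⟨hz1, hz2, hz3⟩ hres hvan n a b hab
    _ = c (C.proj x) (C.proj (C.Lam.comp (C.ver x) y)) := by
        rw [proj, C.projv_eq hna, proj, C.projv_eq hmb]
    _ = c (C.proj x) (C.proj y) := by rw [C.proj_vcomp (C.ver_onlyLast x) hvy]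

end CovSeqLimit

end Infrastructure

open KGraph in
/-- For `Λ = lim (Λ_n, p_n)` and `c ∈ Z²(Λ₁, A)`, there is a unique
`2`-cocycle `c'` on `Λ` extending `c` that vanishes whenever either argument lies in
`Λ^{ℕ e_{k+1}}`. -/
theorem existsUnique_extension_cocycle {k : ℕ} (C : CovSeqLimit k)
    (A : Type*) [AddCommGroup A]
    (c : (C.L 0).M → (C.L 0).M → A) (hc : c ∈ Z2 (C.L 0) A) :
    ∃! c' : C.Lam.M → C.Lam.M → A,
      c' ∈ Z2 C.Lam A ∧
      (∀ x y : (C.L 0).M, c' (C.ι 0 x) (C.ι 0 y) = c x y) ∧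
      (∀ x y : C.Lam.M,
        CovSeqLimit.OnlyLast (C.Lam.deg x) ∨ CovSeqLimit.OnlyLast (C.Lam.deg y) →
          c' x y = 0) := by
  have hc' : (C.L 0).IsCocycle2 c := hc
  obtain ⟨hc1, hc2, hc3⟩ := hc'
  refine ⟨fun x y => if C.Lam.Composable x y then c (C.proj x) (C.proj y) else 0,
    ⟨?_, ?_, ?_⟩, ?_⟩
  · -- membership in Z²(Λ, A)
    show C.Lam.IsCocycle2 _
    refine ⟨fun x y h => if_neg h, fun x y h => ?_, fun x y z hxy hyz => ?_⟩
    · show (if C.Lam.Composable x y then c (C.proj x) (C.proj y) else 0) = 0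
      by_cases hcomp : C.Lam.Composable x y
      · rw [if_pos hcomp]
        refine hc2 _ _ ?_
        rcases h with h | h
        · exact Or.inl (C.proj_isVertex h)
        · exact Or.inr (C.proj_isVertex h)
      · exact if_neg hcomp
    · have h1 : C.Lam.Composable (C.Lam.comp x y) z := by
        show C.Lam.src _ = C.Lam.rng _
        rw [C.Lam.src_comp _ _ hxy]; exact hyz
      have h2 : C.Lam.Composable x (C.Lam.comp y z) := by
        show C.Lam.src _ = C.Lam.rng _
        rw [C.Lam.rng_comp _ _ hyz]; exact hxy
      simp only [if_pos hxy, if_pos hyz, if_pos h1, if_pos h2]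
      rw [(C.proj_comp hxy).2, (C.proj_comp hyz).2]
      exact hc3 _ _ _ (C.proj_comp hxy).1 (C.proj_comp hyz).1
  · -- restriction to Λ₁
    intro x y
    show (if C.Lam.Composable (C.ι 0 x) (C.ι 0 y) then
      c (C.proj (C.ι 0 x)) (C.proj (C.ι 0 y)) else 0) = c x y
    by_cases hcomp : C.Lam.Composable (C.ι 0 x) (C.ι 0 y)
    · rw [if_pos hcomp, C.proj_ι0, C.proj_ι0]
    · rw [if_neg hcomp]
      refine (hc1 x y fun hxy => ?_).symm
      exact hcomp (C.ι_composable hxy)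
  · -- vanishing on vertical morphisms
    intro x y h
    show (if C.Lam.Composable x y then c (C.proj x) (C.proj y) else 0) = 0
    by_cases hcomp : C.Lam.Composable x y
    · rw [if_pos hcomp]
      refine hc2 _ _ ?_
      rcases h with h | h
      · exact Or.inl (C.proj_isVertex_of_onlyLast h)
      · exact Or.inr (C.proj_isVertex_of_onlyLast h)
    · exact if_neg hcomp
  · -- uniqueness
    rintro c' ⟨hZ', hres', hvan'⟩
    have hZ : C.Lam.IsCocycle2 c' := hZ'
    funext x y
    show c' x y = if C.Lam.Composable x y then c (C.proj x) (C.proj y) else 0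
    by_cases hcomp : C.Lam.Composable x y
    · rw [if_pos hcomp]
      exact C.cext_eq hZ hres' hvan' hcomp
    · rw [if_neg hcomp]
      exact hZ.1 x y hcomp
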